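/- Let c_1, c_2, … be an infinite sequence of complete histories (each with every value enqueued at most once) such that no c_i contains any of the VFresh, VRepet, VOrd, VWit violations, for every i the history c_i is a prefix of c_{i+1}, and the number of dequeue events in c_i is strictly less than that of c_{i+1}. If c_1 contains an enqueue event enq(x), then there exists some c_j containing a dequeue event deq(x). -/

import Mathlib

/-- Invocation and response actions of queue events. -/
inductive HAction : Type
  | invEnq : ℕ → ℕ → HAction
  | resEnq : ℕ → HAction
  | invDeq : ℕ → HAction
  | resDeq : ℕ → Option ℕ → HAction
  deriving DecidableEq

def HAction.uid : HAction → ℕ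
  | HAction.invEnq u _ => u
  | HAction.resEnq u => u
  | HAction.invDeq u => u
  | HAction.resDeq u _ => u

def HAction.isInv : HAction → Bool
  | HAction.invEnq _ _ => true
  | HAction.invDeq _ => true
  | _ => false

/-- Whether the action belongs to an enqueue method. -/
def HAction.isEnqM : HAction → Bool
  | HAction.invEnq _ _ => true
  | HAction.resEnq _ => true
  | _ => false

abbrev History := List HAction

/-- Enqueue events (identified by their uid) invoked in `c`. -/
def EnqSet (c : History) : Set ℕ := {u | ∃ x, HAction.invEnq u x ∈ c}

/-- Dequeue events (identified by their uid) invoked in `c`. -/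
def DeqSet (c : History) : Set ℕ := {u | HAction.invDeq u ∈ c}

/-- `u ≺_c u'`: the response of `u` occurs before the invocation of `u'` in `c`. -/
def HPrec (c : History) (u u' : ℕ) : Prop :=
  ∃ (i j : ℕ) (a a' : HAction), i < j ∧ (c)[i]? = some a ∧ a.isInv = false ∧ a.uid = u ∧
    (c)[j]? = some a' ∧ a'.isInv = true ∧ a'.uid = u'

/-- Event `u` is pending in `c`: invoked but not responded. -/
def Pending (c : History) (u : ℕ) : Prop :=
  (∃ a ∈ c, a.isInv = true ∧ a.uid = u) ∧ ¬(∃ a ∈ c, a.isInv = false ∧ a.uid = u)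

/-- A history is complete if it has no pending events. -/
def CompleteH (c : History) : Prop := ∀ u, ¬ Pending c u

/-- Well-formed history: unique invocations and responses per uid, and every
response is preceded by its matching invocation (same uid, same method). -/
structure WellFormed (c : History) : Prop where
  invNodup : ((c.filter (fun a => a.isInv)).map HAction.uid).Nodup
  resNodup : ((c.filter (fun a => !a.isInv)).map HAction.uid).Nodup
  resMatched : ∀ (j : ℕ) (a' : HAction), (c)[j]? = some a' → a'.isInv = false →
    ∃ (i : ℕ) (a : HAction), i < j ∧ (c)[i]? = some a ∧ a.isInv = true ∧ a.uid = a'.uid ∧ a.isEnqM = a'.isEnqM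

/-- Each value is enqueued at most once in `c`. -/
def UniqueEnqVals (c : History) : Prop :=
  ∀ u u' x, HAction.invEnq u x ∈ c → HAction.invEnq u' x ∈ c → u = u'

/-- A dequeue returns a value never enqueued (or enqueued only after it). -/
def VFresh (c : History) : Prop :=
  ∃ d x, HAction.resDeq d (some x) ∈ c ∧
    ((∀ e, HAction.invEnq e x ∉ c) ∨ ∃ e, HAction.invEnq e x ∈ c ∧ HPrec c d e)

/-- Two distinct dequeues return the same non-NULL value. -/
def VRepet (c : History) : Prop :=
  ∃ d d' x, d ≠ d' ∧ HAction.resDeq d (some x) ∈ c ∧ HAction.resDeq d' (some x) ∈ c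

/-- Values dequeued out of order. -/
def VOrd (c : History) : Prop :=
  ∃ ex ey x y dx, HAction.invEnq ey y ∈ c ∧ HAction.invEnq ex x ∈ c ∧ HPrec c ey ex ∧
    HAction.resDeq dx (some x) ∈ c ∧
    ((∀ d, HAction.resDeq d (some y) ∉ c) ∨
     ∃ dy, HAction.resDeq dy (some y) ∈ c ∧ HPrec c dx dy)

/-- A dequeue returns NULL although the queue is never logically empty during it. -/
def VWit (c : History) : Prop :=
  ∃ (u : ℕ) (c0 cd c3 : History),
    c = c0 ++ [HAction.invDeq u] ++ cd ++ [HAction.resDeq u none] ++ c3 ∧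
    ∀ c1 c2, cd = c1 ++ c2 →
      ∃ e x, HAction.invEnq e x ∈ (c0 ++ [HAction.invDeq u] ++ c1) ∧
             HAction.resEnq e ∈ (c0 ++ [HAction.invDeq u] ++ c1) ∧
             ∀ d, HAction.resDeq d (some x) ∈ c →
               HAction.invDeq d ∉ (c0 ++ [HAction.invDeq u] ++ c1)

/-- Number of dequeue events invoked in a history. -/
def numDeq (c : History) : ℕ :=
  (c.filter (fun a => match a with | HAction.invDeq _ => true | _ => false)).length


section AuxNLE

open HAction

private lemma split_two_nle {l : List HAction} {i j : ℕ} {a b : HAction} (hij : i < j)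
    (ha : l[i]? = some a) (hb : l[j]? = some b) :
    l = l.take i ++ [a] ++ ((l.drop (i+1)).take (j - i - 1)) ++ [b] ++ l.drop (j+1) := by
  obtain ⟨hi, hia⟩ := List.getElem?_eq_some_iff.1 ha
  obtain ⟨hj, hjb⟩ := List.getElem?_eq_some_iff.1 hb
  have e1 : l.drop i = a :: l.drop (i+1) := by
    rw [List.drop_eq_getElem_cons hi]
    rw [hia]
  have e3 : l.drop (i+1) = (l.drop (i+1)).take (j - i - 1) ++ l.drop j := by
    conv_lhs => rw [← List.take_append_drop (j - i - 1) (l.drop (i+1))]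
    congr 1
    rw [List.drop_drop]
    congr 1
    omega
  have e2 : l.drop j = b :: l.drop (j+1) := by
    rw [List.drop_eq_getElem_cons hj]
    rw [hjb]
  conv_lhs => rw [← List.take_append_drop i l, e1, e3, e2]
  simp

private lemma uid_inj_inv_nle {c : History} (h : WellFormed c) {a b : HAction}
    (ha : a ∈ c) (hb : b ∈ c) (hia : a.isInv = true) (hib : b.isInv = true)
    (huid : a.uid = b.uid) : a = b :=
  List.inj_on_of_nodup_map h.invNodup (List.mem_filter.2 ⟨ha, hia⟩)
    (List.mem_filter.2 ⟨hb, hib⟩) huid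

private lemma res_has_inv_nle {c : History} (h : WellFormed c) {a' : HAction}
    (hm : a' ∈ c) (hr : a'.isInv = false) :
    ∃ a ∈ c, a.isInv = true ∧ a.uid = a'.uid ∧ a.isEnqM = a'.isEnqM := by
  obtain ⟨n, hn⟩ := List.mem_iff_getElem?.1 hm
  obtain ⟨i, a, _, hi, h1, h2, h3⟩ := h.resMatched n a' hn hr
  exact ⟨a, List.mem_of_getElem? hi, h1, h2, h3⟩

private lemma resDeq_inv_nle {c : History} (h : WellFormed c) {d : ℕ} {v : Option ℕ}
    (hm : HAction.resDeq d v ∈ c) : HAction.invDeq d ∈ c := by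
  obtain ⟨a, ha, h1, h2, h3⟩ := res_has_inv_nle h hm rfl
  cases a with
  | invDeq u' => simp [HAction.uid] at h2; rwa [h2] at ha
  | invEnq u' y => simp [HAction.isEnqM] at h3
  | resEnq u' => simp [HAction.isInv] at h1
  | resDeq u' v' => simp [HAction.isInv] at h1

private lemma resEnq_inv_nle {c : History} (h : WellFormed c) {e : ℕ}
    (hm : HAction.resEnq e ∈ c) : ∃ y, HAction.invEnq e y ∈ c := by
  obtain ⟨a, ha, h1, h2, h3⟩ := res_has_inv_nle h hm rfl
  cases a with
  | invEnq u' y => simp [HAction.uid] at h2; exact ⟨y, by rwa [h2] at ha⟩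
  | invDeq u' => simp [HAction.isEnqM] at h3
  | resEnq u' => simp [HAction.isInv] at h1
  | resDeq u' v' => simp [HAction.isInv] at h1

private lemma complete_res_nle {c : History} (hc : CompleteH c) {a : HAction}
    (ha : a ∈ c) (hinv : a.isInv = true) :
    ∃ b ∈ c, b.isInv = false ∧ b.uid = a.uid := by
  have hp := hc a.uid
  unfold Pending at hp
  push_neg at hp
  exact hp ⟨a, ha, hinv, rfl⟩

private lemma enq_completed_nle {c : History} (h : WellFormed c) (hc : CompleteH c) {e y : ℕ}
    (hm : HAction.invEnq e y ∈ c) : HAction.resEnq e ∈ c := by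
  obtain ⟨b, hb, hbinv, hbuid⟩ := complete_res_nle hc hm rfl
  cases b with
  | resEnq e' =>
    simp [HAction.uid] at hbuid
    rwa [hbuid] at hb
  | resDeq d' v' =>
    have hi : HAction.invDeq d' ∈ c := resDeq_inv_nle h hb
    have heq : HAction.invDeq d' = HAction.invEnq e y :=
      uid_inj_inv_nle h hi hm rfl rfl (by simpa [HAction.uid] using hbuid)
    exact absurd heq (by simp)
  | invEnq _ _ => simp [HAction.isInv] at hbinv
  | invDeq _ => simp [HAction.isInv] at hbinv

private lemma deq_completed_nle {c : History} (h : WellFormed c) (hc : CompleteH c) {d : ℕ}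
    (hm : HAction.invDeq d ∈ c) : ∃ v, HAction.resDeq d v ∈ c := by
  obtain ⟨b, hb, hbinv, hbuid⟩ := complete_res_nle hc hm rfl
  cases b with
  | resDeq d' v' =>
    simp [HAction.uid] at hbuid
    exact ⟨v', by rwa [hbuid] at hb⟩
  | resEnq e' =>
    obtain ⟨y, hi⟩ := resEnq_inv_nle h hb
    have heq : HAction.invEnq e' y = HAction.invDeq d :=
      uid_inj_inv_nle h hi hm rfl rfl (by simpa [HAction.uid] using hbuid)
    exact absurd heq (by simp)
  | invEnq _ _ => simp [HAction.isInv] at hbinv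
  | invDeq _ => simp [HAction.isInv] at hbinv

private def deqP : HAction → Bool := fun a => match a with
  | HAction.invDeq _ => true | _ => false

private def dListNLE (l : History) : List ℕ := (l.filter deqP).map HAction.uid

private lemma length_dList_nle (l : History) : (dListNLE l).length = numDeq l := by
  simp only [dListNLE, List.length_map]
  rfl

private lemma nodup_dList_nle {l : History} (h : WellFormed l) : (dListNLE l).Nodup := by
  have hs : List.Sublist (l.filter deqP) (l.filter (fun a => a.isInv)) := by
    have heq : l.filter deqP = (l.filter (fun a => a.isInv)).filter deqP := by
      rw [List.filter_filter]
      apply List.filter_congr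
      intro a _
      cases a <;> simp [deqP, HAction.isInv]
    rw [heq]
    exact List.filter_sublist
  exact List.Nodup.sublist (hs.map _) h.invNodup

private lemma mem_dList_nle {l : History} {d : ℕ} :
    d ∈ dListNLE l ↔ HAction.invDeq d ∈ l := by
  constructor
  · intro h
    obtain ⟨a, ha, huid⟩ := List.mem_map.1 h
    obtain ⟨hmem, hp⟩ := List.mem_filter.1 ha
    cases a with
    | invDeq u' => simp [HAction.uid] at huid; rwa [huid] at hmem
    | invEnq _ _ => simp [deqP] at hp
    | resEnq _ => simp [deqP] at hp
    | resDeq _ _ => simp [deqP] at hp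
  · intro h
    exact List.mem_map.2 ⟨HAction.invDeq d, List.mem_filter.2 ⟨h, rfl⟩, rfl⟩

private def enqValNLE : HAction → Option ℕ := fun a => match a with
  | HAction.invEnq _ z => some z | _ => none

private lemma mem_enqVals_nle {l : History} {z : ℕ} :
    z ∈ l.filterMap enqValNLE ↔ ∃ e, HAction.invEnq e z ∈ l := by
  rw [List.mem_filterMap]
  constructor
  · rintro ⟨a, ha, hz⟩
    cases a with
    | invEnq e y => simp [enqValNLE] at hz; exact ⟨e, by rwa [hz] at ha⟩
    | invDeq _ => simp [enqValNLE] at hz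
    | resEnq _ => simp [enqValNLE] at hz
    | resDeq _ _ => simp [enqValNLE] at hz
  · rintro ⟨e, he⟩
    exact ⟨HAction.invEnq e z, he, rfl⟩

end AuxNLE

/-- In a growing chain of violation-free complete histories with an increasing
number of dequeue events, every enqueued value is eventually dequeued. -/
theorem no_lost_elements (c : ℕ → History)
    (hwf : ∀ i, WellFormed (c i)) (hcomp : ∀ i, CompleteH (c i))
    (hu : ∀ i, UniqueEnqVals (c i))
    (hnv : ∀ i, ¬ VFresh (c i) ∧ ¬ VRepet (c i) ∧ ¬ VOrd (c i) ∧ ¬ VWit (c i))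
    (hpre : ∀ i, c i <+: c (i + 1))
    (hd : ∀ i, numDeq (c i) < numDeq (c (i + 1)))
    (u x : ℕ) (he : HAction.invEnq u x ∈ c 0) :
    ∃ j d, HAction.resDeq d (some x) ∈ c j := by
  classical
  by_contra hcon
  push_neg at hcon
  have hchain : ∀ j, c 0 <+: c j := by
    intro j
    induction j with
    | zero => exact List.prefix_refl _
    | succ n ih => exact ih.trans (hpre n)
  have hgrow : ∀ j, numDeq (c 0) + j ≤ numDeq (c j) := by
    intro j
    induction j with
    | zero => simp
    | succ n ih => have := hd n; omega
  set N0 := (c 0).length with hN0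
  set j := N0 + 1 with hjdef
  set L := c j with hLdef
  obtain ⟨t, ht⟩ := hchain j
  rw [← hLdef] at ht
  have hWFL : WellFormed L := hwf j
  have hre0 : HAction.resEnq u ∈ c 0 := enq_completed_nle (hwf 0) (hcomp 0) he
  obtain ⟨i0, hi0⟩ := List.mem_iff_getElem?.1 hre0
  have hi0len : i0 < N0 := (List.getElem?_eq_some_iff.1 hi0).1
  have hi0L : L[i0]? = some (HAction.resEnq u) := by
    rw [← ht, List.getElem?_append_left hi0len]
    exact hi0
  have hfresh := (hnv j).1
  have hrep := (hnv j).2.1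
  have hord := (hnv j).2.2.1
  have hwit := (hnv j).2.2.2
  have hval : ∀ d z, HAction.resDeq d (some z) ∈ L → ∃ e, HAction.invEnq e z ∈ c 0 := by
    intro d z hm
    have h1 : ∃ e, HAction.invEnq e z ∈ L := by
      by_contra hno
      push_neg at hno
      exact hfresh ⟨d, z, hm, Or.inl hno⟩
    obtain ⟨e, heL⟩ := h1
    by_contra hno
    push_neg at hno
    obtain ⟨n, hn⟩ := List.mem_iff_getElem?.1 heL
    have hnge : N0 ≤ n := by
      by_contra hlt
      push_neg at hlt
      apply hno e
      have hg : (c 0)[n]? = some (HAction.invEnq e z) := by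
        have h' := hn
        rw [← ht, List.getElem?_append_left hlt] at h'
        exact h'
      exact List.mem_of_getElem? hg
    have hprec : HPrec L u e :=
      ⟨i0, n, _, _, lt_of_lt_of_le hi0len hnge, hi0L, rfl, rfl, hn, rfl, rfl⟩
    exact hord ⟨e, u, z, x, d, (hchain j).subset he, heL, hprec, hm,
      Or.inl (fun d' => hcon j d')⟩
  set Dall : Finset ℕ := (dListNLE L).toFinset with hDalldef
  set D0 : Finset ℕ := (dListNLE (c 0)).toFinset with hD0def
  set NN : Finset ℕ := Dall.filter (fun d => ∃ z, HAction.resDeq d (some z) ∈ L) with hNNdef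
  set V0 : Finset ℕ := ((c 0).filterMap enqValNLE).toFinset with hV0def
  have hcardDall : Dall.card = numDeq L := by
    rw [hDalldef, List.toFinset_card_of_nodup (nodup_dList_nle hWFL), length_dList_nle]
  have hcardD0 : D0.card = numDeq (c 0) := by
    rw [hD0def, List.toFinset_card_of_nodup (nodup_dList_nle (hwf 0)), length_dList_nle]
  have hsub : D0 ⊆ Dall := by
    intro d hdmem
    rw [hD0def, List.mem_toFinset] at hdmem
    rw [hDalldef, List.mem_toFinset]
    exact mem_dList_nle.2 ((hchain j).subset (mem_dList_nle.1 hdmem))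
  have hV0card : V0.card ≤ N0 :=
    le_trans (List.toFinset_card_le _) (List.length_filterMap_le _ _)
  have hNNcard : NN.card ≤ V0.card := by
    apply Finset.card_le_card_of_injOn
      (fun d => if h : ∃ z, HAction.resDeq d (some z) ∈ L then h.choose else 0)
    · intro d hd
      have hz : ∃ z, HAction.resDeq d (some z) ∈ L := (Finset.mem_filter.1 hd).2
      dsimp only
      rw [dif_pos hz]
      obtain ⟨e, he0⟩ := hval d _ hz.choose_spec
      rw [Finset.mem_coe, hV0def, List.mem_toFinset]
      exact mem_enqVals_nle.2 ⟨e, he0⟩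
    · intro d1 h1 d2 h2 hfeq
      by_contra hne
      have hz1 : ∃ z, HAction.resDeq d1 (some z) ∈ L :=
        (Finset.mem_filter.1 (Finset.mem_coe.1 h1)).2
      have hz2 : ∃ z, HAction.resDeq d2 (some z) ∈ L :=
        (Finset.mem_filter.1 (Finset.mem_coe.1 h2)).2
      dsimp only at hfeq
      rw [dif_pos hz1, dif_pos hz2] at hfeq
      have hm2 : HAction.resDeq d2 (some hz1.choose) ∈ L := by
        rw [hfeq]; exact hz2.choose_spec
      exact hrep ⟨d1, d2, hz1.choose, hne, hz1.choose_spec, hm2⟩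
  have hbig : NN.card < (Dall \ D0).card := by
    rw [Finset.card_sdiff_of_subset hsub, hcardDall, hcardD0]
    have hg : numDeq (c 0) + j ≤ numDeq L := hgrow j
    have hNN' : NN.card ≤ N0 := le_trans hNNcard hV0card
    omega
  obtain ⟨d, hdmem, hdnn⟩ : ∃ d, d ∈ Dall \ D0 ∧ d ∉ NN := by
    by_contra hno
    push_neg at hno
    exact absurd (Finset.card_le_card fun d hd => hno d hd) (not_le.2 hbig)
  obtain ⟨hdDall, hdD0⟩ := Finset.mem_sdiff.1 hdmem
  have hinvL : HAction.invDeq d ∈ L := by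
    rw [hDalldef, List.mem_toFinset] at hdDall
    exact mem_dList_nle.1 hdDall
  have hinv0 : HAction.invDeq d ∉ c 0 := by
    intro hmem
    exact hdD0 (by rw [hD0def, List.mem_toFinset]; exact mem_dList_nle.2 hmem)
  have hnonull : ¬ ∃ z, HAction.resDeq d (some z) ∈ L := by
    intro hz
    exact hdnn (Finset.mem_filter.2 ⟨hdDall, hz⟩)
  obtain ⟨v, hv⟩ := deq_completed_nle hWFL (hcomp j) hinvL
  have hvnone : v = none := by
    cases v with
    | none => rfl
    | some z => exact absurd ⟨z, hv⟩ hnonull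
  subst hvnone
  obtain ⟨jn, hjn⟩ := List.mem_iff_getElem?.1 hv
  obtain ⟨ji, a, hij, hji, hainv, hauid, haenqm⟩ := hWFL.resMatched jn _ hjn rfl
  have ha : a = HAction.invDeq d := by
    cases a with
    | invDeq u' => simp [HAction.uid] at hauid; rw [hauid]
    | invEnq u' y => simp [HAction.isEnqM] at haenqm
    | resEnq u' => simp [HAction.isInv] at hainv
    | resDeq u' v' => simp [HAction.isInv] at hainv
  subst ha
  have hjige : N0 ≤ ji := by
    by_contra hlt
    push_neg at hlt
    apply hinv0
    have hg : (c 0)[ji]? = some (HAction.invDeq d) := by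
      have h' := hji
      rw [← ht, List.getElem?_append_left hlt] at h'
      exact h'
    exact List.mem_of_getElem? hg
  have hsplitL := split_two_nle hij hji hjn
  have hpreT : c 0 <+: L.take ji := by
    have hc0 : c 0 = L.take N0 := by
      rw [← ht]
      exact List.take_left.symm
    have h2 : L.take N0 = (L.take ji).take N0 := by
      rw [List.take_take, Nat.min_eq_left hjige]
    rw [hc0, h2]
    exact List.take_prefix _ _
  apply hwit
  refine ⟨d, L.take ji, (L.drop (ji+1)).take (jn - ji - 1), L.drop (jn+1), hsplitL, ?_⟩
  intro c1 c2 hc12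
  refine ⟨u, x, ?_, ?_, fun d' hd' _ => hcon j d' hd'⟩
  · simp only [List.mem_append]
    exact Or.inl (Or.inl (hpreT.subset he))
  · simp only [List.mem_append]
    exact Or.inl (Or.inl (hpreT.subset hre0))
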